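/- Let Γ ⊂ ℂⁿ be compact, Π : ℂⁿ → ℂᵖ a polynomial map, Ω the unbounded component of ℂᵖ \ Π(Γ), and Γ_Π := Π⁻¹(ℂᵖ \ Ω). Then hull(Γ,p) ⊆ ⋂_Π Γ_Π, where the intersection runs over all polynomial maps Π : ℂⁿ → ℂᵖ. Moreover for p = 1 equality holds: ⋂_Π Γ_Π = Γ̂, the classical polynomial hull. -/

import Mathlib

open MeasureTheory Metric Set Filter Bornology Topology

noncomputable section

/-- `ℂⁿ` with its Euclidean structure. -/
abbrev CSp (n : ℕ) := EuclideanSpace ℂ (Fin n)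

instance (n : ℕ) : MeasureSpace (CSp n) :=
  { volume := (volume : Measure (∀ _ : Fin n, ℂ)).map (MeasurableEquiv.toLp 2 (∀ _ : Fin n, ℂ)) }
instance (n : ℕ) : BorelSpace (CSp n) := (inferInstance : BorelSpace (WithLp 2 (∀ _ : Fin n, ℂ)))
/-- The union of the unbounded connected components of the complement of `K` in `ℂᵖ`. -/
def unbddCompl {p : ℕ} (K : Set (CSp p)) : Set (CSp p) :=
  ⋃₀ {C | C ⊆ Kᶜ ∧ IsConnected C ∧ ¬Bornology.IsBounded C}

/-- `U` is relatively open in `V`. -/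
def RelOpen {n : ℕ} (V U : Set (CSp n)) : Prop := ∃ O, IsOpen O ∧ U = V ∩ O

/-- `f` is holomorphic along `V` on `W ⊆ V`: near each point of `W` it extends to a
holomorphic map of a full neighbourhood in `ℂⁿ` (for `V` open this is just holomorphy on `W`;
for `V` a submanifold this is the usual notion of holomorphy on `V`). -/
def HolomorphicAlong {n q : ℕ} (V W : Set (CSp n)) (f : CSp n → CSp q) : Prop :=
  ∀ a ∈ W, ∃ O : Set (CSp n), IsOpen O ∧ a ∈ O ∧
    ∃ g : CSp n → CSp q, DifferentiableOn ℂ g O ∧ ∀ x ∈ O ∩ V, g x = f x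

/-- `X` is a `p`-pseudoconcave subset of (the complex manifold) `V`: `X` is closed in `V` and
for every relatively open `U ⊂⊂ V` and every holomorphic map `f` from a neighbourhood of the
closure of `U` (in `V`) into `ℂᵖ`, `f(X ∩ U)` avoids the unbounded component of
`ℂᵖ \ f(X ∩ ∂U)`, where `∂U = closure U \ U` is the boundary of `U` in `V`. -/
def IsPseudoconcave {n : ℕ} (p : ℕ) (V X : Set (CSp n)) : Prop :=
  X ⊆ V ∧ (V ∩ closure X ⊆ X) ∧
  ∀ U : Set (CSp n), RelOpen V U → IsCompact (closure U) → closure U ⊆ V →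
    ∀ W : Set (CSp n), RelOpen V W → closure U ⊆ W →
      ∀ f : CSp n → CSp p, HolomorphicAlong V W f →
        f '' (X ∩ U) ⊆ (unbddCompl (f '' (X ∩ (closure U \ U))))ᶜ
/-- The polynomial `p`-hull of a compact `Γ ⊆ ℂⁿ`: `Γ` together with the union of all
`p`-pseudoconcave subsets of `ℂⁿ \ Γ` which are bounded in `ℂⁿ`. -/
def pHull {n : ℕ} (p : ℕ) (Γ : Set (CSp n)) : Set (CSp n) :=
  Γ ∪ ⋃₀ {S | IsPseudoconcave p Γᶜ S ∧ Bornology.IsBounded S}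

/-- The classical polynomial hull `Γ̂` of a compact `Γ ⊆ ℂⁿ`. -/
def polyHull {n : ℕ} (Γ : Set (CSp n)) : Set (CSp n) :=
  {x | ∀ P : MvPolynomial (Fin n) ℂ,
    ‖MvPolynomial.eval (fun i => x i) P‖ ≤
      sSup ((fun z : CSp n => ‖MvPolynomial.eval (fun i => z i) P‖) '' Γ)}
/-- The polynomial map `ℂⁿ → ℂᵖ` determined by a `p`-tuple of polynomials. -/
def polyMap {n p : ℕ} (P : Fin p → MvPolynomial (Fin n) ℂ) (x : CSp n) : CSp p :=
  WithLp.toLp 2 (fun j => MvPolynomial.eval (fun i => x i) (P j))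

/-- For a polynomial map `Π : ℂⁿ → ℂᵖ`, the set `Γ_Π = Π⁻¹(ℂᵖ \ Ω)` where `Ω` is the
unbounded component of `ℂᵖ \ Π(Γ)`. -/
def GammaPi {n p : ℕ} (Γ : Set (CSp n)) (P : Fin p → MvPolynomial (Fin n) ℂ) :
    Set (CSp n) :=
  polyMap P ⁻¹' (unbddCompl (polyMap P '' Γ))ᶜ

/-! ### Auxiliary lemmas -/

section Aux

private lemma eval_differentiable {n : ℕ} (P : MvPolynomial (Fin n) ℂ) :
    Differentiable ℂ (fun y : Fin n → ℂ => MvPolynomial.eval y P) := by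
  induction P using MvPolynomial.induction_on with
  | C a => simpa only [MvPolynomial.eval_C] using differentiable_const a
  | add p q hp hq => simp only [map_add]; exact hp.add hq
  | mul_X p i hp =>
      simp only [map_mul, MvPolynomial.eval_X]; exact
        hp.mul ((ContinuousLinearMap.proj (R := ℂ) (φ := fun _ : Fin n => ℂ) i).differentiable)

private lemma polyMap_differentiable {n q : ℕ} (P : Fin q → MvPolynomial (Fin n) ℂ) :
    Differentiable ℂ (polyMap P) := by
  have h1 : Differentiable ℂ (fun y : Fin n → ℂ => fun j : Fin q => MvPolynomial.eval y (P j)) :=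
    differentiable_pi.mpr fun j => eval_differentiable (P j)
  exact ((PiLp.continuousLinearEquiv 2 ℂ (fun _ : Fin q => ℂ)).symm.differentiable.comp h1).comp
    (PiLp.continuousLinearEquiv 2 ℂ (fun _ : Fin n => ℂ)).differentiable

private lemma mem_unbddCompl {q : ℕ} {K : Set (CSp q)} {x : CSp q} :
    x ∈ unbddCompl K ↔
      ∃ C : Set (CSp q), C ⊆ Kᶜ ∧ IsConnected C ∧ ¬Bornology.IsBounded C ∧ x ∈ C := by
  constructor
  · rintro ⟨C, ⟨h1, h2, h3⟩, hx⟩; exact ⟨C, h1, h2, h3, hx⟩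
  · rintro ⟨C, h1, h2, h3, hx⟩; exact ⟨C, ⟨h1, h2, h3⟩, hx⟩

private lemma unbddCompl_subset {q : ℕ} (K : Set (CSp q)) : unbddCompl K ⊆ Kᶜ :=
  sUnion_subset fun _ hC => hC.1

private lemma unbounded_of_norm {E : Type*} [SeminormedAddCommGroup E] {T : Set E}
    (h : ∀ c : ℝ, ∃ v ∈ T, c < ‖v‖) : ¬Bornology.IsBounded T := by
  intro hb
  obtain ⟨c, hc⟩ := isBounded_iff_forall_norm_le.1 hb
  obtain ⟨v, hv, hcv⟩ := h c
  exact absurd (hc v hv) (not_le.2 hcv)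

private lemma csp1_norm (w : CSp 1) : ‖w‖ = ‖w 0‖ := by
  rw [EuclideanSpace.norm_eq]
  rw [Fin.sum_univ_one]
  exact Real.sqrt_sq (norm_nonneg _)

private lemma polyMap_holo {n q : ℕ} (P : Fin q → MvPolynomial (Fin n) ℂ)
    (V W : Set (CSp n)) : HolomorphicAlong V W (polyMap P) :=
  fun a _ => ⟨univ, isOpen_univ, mem_univ a, polyMap P,
    (polyMap_differentiable P).differentiableOn, fun _ _ => rfl⟩

end Aux

/-! ### Part 1: the hull is contained in every `Γ_Π` -/

private lemma part1 {n : ℕ} (p : ℕ) (hp : 1 ≤ p) (Γ : Set (CSp n)) (hΓ : IsCompact Γ) :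
    pHull p Γ ⊆ ⋂ P : Fin p → MvPolynomial (Fin n) ℂ, GammaPi Γ P := by
  intro x hx
  refine mem_iInter.2 fun P => ?_
  simp only [GammaPi, mem_preimage, mem_compl_iff]
  intro hcon
  rcases hx with hxΓ | ⟨S, ⟨hS, hSb⟩, hxS⟩
  · exact unbddCompl_subset _ hcon (mem_image_of_mem _ hxΓ)
  rcases Γ.eq_empty_or_nonempty with hΓe | hΓne
  · -- `Γ = ∅`: pseudoconcavity applied to a big ball gives a direct contradiction
    obtain ⟨R₀, hR₀⟩ := hSb.subset_closedBall 0
    set U : Set (CSp n) := Γᶜ ∩ ball 0 (R₀ + 1) with hU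
    have hUsub : closure U ⊆ closedBall 0 (R₀ + 1) :=
      closure_minimal (inter_subset_right.trans ball_subset_closedBall) isClosed_closedBall
    have hVuniv : Γᶜ = (univ : Set (CSp n)) := by simp [hΓe]
    have happ := hS.2.2 U ⟨ball 0 (R₀ + 1), isOpen_ball, hU⟩
      ((isCompact_closedBall 0 (R₀ + 1)).of_isClosed_subset isClosed_closure hUsub)
      (by rw [hVuniv]; exact subset_univ _)
      Γᶜ ⟨univ, isOpen_univ, (inter_univ _).symm⟩
      (hUsub.trans (by rw [hVuniv]; exact subset_univ _))
      (polyMap P) (polyMap_holo P _ _)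
    have hmemU : ∀ z ∈ S, z ∈ U := by
      intro z hz
      refine ⟨hS.1 hz, ?_⟩
      rw [mem_ball_zero_iff]
      exact lt_of_le_of_lt (mem_closedBall_zero_iff.1 (hR₀ hz)) (lt_add_one _)
    have hE : S ∩ (closure U \ U) = ∅ := by
      ext z
      simp only [mem_inter_iff, mem_diff, mem_empty_iff_false, iff_false, not_and]
      intro hzS hzc
      simp only [not_not]
      exact hmemU z hzS
    have hfx := happ (mem_image_of_mem (polyMap P) ⟨hxS, hmemU x hxS⟩)
    refine hfx ?_
    rw [hE]
    refine ⟨univ, ⟨by simp, ?_, ?_⟩, mem_univ _⟩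
    · exact ⟨⟨0, mem_univ 0⟩, (convex_univ : Convex ℝ (univ : Set (CSp p))).isPreconnected⟩
    · refine unbounded_of_norm fun c => ?_
      refine ⟨EuclideanSpace.single (⟨0, hp⟩ : Fin p) ((|c| + 1 : ℝ) : ℂ), mem_univ _, ?_⟩
      rw [EuclideanSpace.norm_single, Complex.norm_real, Real.norm_eq_abs,
        abs_of_nonneg (by positivity)]
      calc c ≤ |c| := le_abs_self c
        _ < |c| + 1 := lt_add_one _
  · -- `Γ ≠ ∅`
    set f := polyMap P with hf
    have hfc : Continuous f := (polyMap_differentiable P).continuous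
    set KΓ := f '' Γ with hKΓ
    have hKΓc : IsCompact KΓ := hΓ.image hfc
    have hKΓne : KΓ.Nonempty := hΓne.image f
    have hKΓcl : IsClosed KΓ := hKΓc.isClosed
    obtain ⟨C, hCsub, hCconn, hCunb, hxC⟩ := mem_unbddCompl.1 hcon
    have hfxmem : f x ∈ KΓᶜ := hCsub hxC
    set Ω := connectedComponentIn KΓᶜ (f x) with hΩ
    have hΩopen : IsOpen Ω := (isOpen_compl_iff.2 hKΓcl).connectedComponentIn
    have hΩconn : IsConnected Ω := isConnected_connectedComponentIn_iff.2 hfxmem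
    have hCΩ : C ⊆ Ω := hCconn.isPreconnected.subset_connectedComponentIn hxC hCsub
    have hΩunb : ¬Bornology.IsBounded Ω := fun h => hCunb (h.subset hCΩ)
    obtain ⟨M₀, hM₀⟩ := isBounded_iff_forall_norm_le.1 hKΓc.isBounded
    set M := max M₀ 0 with hMdef
    have hMK : ∀ v ∈ KΓ, ‖v‖ ≤ M := fun v hv => (hM₀ v hv).trans (le_max_left _ _)
    have hM0 : (0 : ℝ) ≤ M := le_max_right _ _
    obtain ⟨y, hyΩ, hyM⟩ : ∃ y ∈ Ω, M < ‖y‖ := by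
      by_contra h
      push_neg at h
      exact hΩunb (isBounded_iff_forall_norm_le.2 ⟨M, h⟩)
    have hy0 : (0 : ℝ) < ‖y‖ := lt_of_le_of_lt hM0 hyM
    have hΩpath : IsPathConnected Ω := hΩopen.isConnected_iff_isPathConnected.1 hΩconn
    obtain ⟨γ, hγ⟩ := hΩpath.joinedIn (f x) (mem_connectedComponentIn hfxmem) y hyΩ
    set T₁ : Set (CSp p) := range γ with hT₁
    have hT₁comp : IsCompact T₁ := isCompact_range γ.continuous
    have hT₁Ω : T₁ ⊆ Ω := by rintro v ⟨t, rfl⟩; exact hγ t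
    have hT₁ne : T₁.Nonempty := range_nonempty _
    set T₂ : Set (CSp p) := (fun t : ℝ => t • y) '' Ici 1 with hT₂
    have hyT₂ : y ∈ T₂ := ⟨1, self_mem_Ici, one_smul ℝ y⟩
    have hyT₁ : y ∈ T₁ := ⟨1, γ.target⟩
    set T := T₁ ∪ T₂ with hT
    have hT₂conn : IsConnected T₂ :=
      isConnected_Ici.image _ (continuous_id.smul continuous_const).continuousOn
    have hTconn : IsConnected T :=
      IsConnected.union ⟨y, hyT₁, hyT₂⟩ (isConnected_range γ.continuous) hT₂conn
    have hfxT : f x ∈ T := Or.inl ⟨0, γ.source⟩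
    have hTunb : ¬Bornology.IsBounded T := by
      refine unbounded_of_norm fun c => ?_
      set t := max 1 ((c + 1) / ‖y‖) with htdef
      have ht1 : (1 : ℝ) ≤ t := le_max_left _ _
      refine ⟨t • y, Or.inr ⟨t, ht1, rfl⟩, ?_⟩
      have hns : ‖t • y‖ = t * ‖y‖ := by
        rw [norm_smul, Real.norm_eq_abs, abs_of_pos (lt_of_lt_of_le one_pos ht1)]
      rw [hns]
      calc c < c + 1 := lt_add_one c
        _ = ((c + 1) / ‖y‖) * ‖y‖ := by field_simp
        _ ≤ t * ‖y‖ := by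
            apply mul_le_mul_of_nonneg_right (le_max_right _ _) (norm_nonneg _)
    -- positive separation of `T` from `KΓ`
    obtain ⟨u₀, hu₀, hu₀min⟩ :=
      hT₁comp.exists_isMinOn hT₁ne (continuous_infDist_pt KΓ).continuousOn
    have hδ₁ : 0 < infDist u₀ KΓ :=
      (hKΓcl.notMem_iff_infDist_pos hKΓne).1 (connectedComponentIn_subset _ _ (hT₁Ω hu₀))
    set δ := min (infDist u₀ KΓ) (‖y‖ - M) with hδdef
    have hδpos : 0 < δ := lt_min hδ₁ (by linarith)
    have hTsep : ∀ v ∈ T, δ ≤ infDist v KΓ := by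
      rintro v (hv | ⟨t, ht, rfl⟩)
      · exact le_trans (min_le_left _ _) (hu₀min hv)
      · refine le_trans (min_le_right _ _) ?_
        rw [Metric.infDist_eq_iInf]
        haveI : Nonempty KΓ := hKΓne.to_subtype
        refine le_ciInf fun u => ?_
        have h1 : ‖(u : CSp p)‖ ≤ M := hMK _ u.2
        have h2 : ‖y‖ ≤ t * ‖y‖ := le_mul_of_one_le_left (norm_nonneg y) ht
        have h3 : ‖t • y‖ = t * ‖y‖ := by
          rw [norm_smul, Real.norm_eq_abs, abs_of_pos (lt_of_lt_of_le one_pos ht)]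
        have h4 : ‖t • y‖ - ‖(u : CSp p)‖ ≤ dist (t • y) (u : CSp p) := by
          rw [dist_eq_norm]; exact norm_sub_norm_le _ _
        linarith
    -- choice of ε
    have hclosS : IsCompact (closure S) := hSb.isCompact_closure
    have hΓcl : IsClosed Γ := hΓ.isClosed
    set Gs := {z : CSp n | infDist (f z) KΓ < δ} with hGs
    have hGsopen : IsOpen Gs := isOpen_lt ((continuous_infDist_pt KΓ).comp hfc) continuous_const
    have hxnotΓ : x ∉ Γ := hS.1 hxS
    have hxdist : 0 < infDist x Γ := (hΓcl.notMem_iff_infDist_pos hΓne).1 hxnotΓ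
    set B₀ := closure S \ Gs with hB₀
    have hB₀comp : IsCompact B₀ := hclosS.diff hGsopen
    have hB₀Γ : ∀ z ∈ B₀, z ∉ Γ := by
      rintro z ⟨hz1, hz2⟩ hzΓ
      refine hz2 ?_
      show infDist (f z) KΓ < δ
      rw [Metric.infDist_zero_of_mem (mem_image_of_mem f hzΓ)]
      exact hδpos
    obtain ⟨ε, hε0, hεx, hεkey⟩ : ∃ ε : ℝ, 0 < ε ∧ ε < infDist x Γ ∧
        ∀ z ∈ closure S, infDist z Γ ≤ ε → infDist (f z) KΓ < δ := by
      rcases B₀.eq_empty_or_nonempty with hB | hB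
      · refine ⟨infDist x Γ / 2, by linarith, by linarith, fun z hz _ => ?_⟩
        by_contra h
        have : z ∈ B₀ := ⟨hz, h⟩
        rw [hB] at this
        exact this
      · obtain ⟨z₀, hz₀B, hz₀min⟩ :=
          hB₀comp.exists_isMinOn hB (continuous_infDist_pt Γ).continuousOn
        have hz₀pos : 0 < infDist z₀ Γ :=
          (hΓcl.notMem_iff_infDist_pos hΓne).1 (hB₀Γ _ hz₀B)
        refine ⟨min (infDist z₀ Γ) (infDist x Γ) / 2, half_pos (lt_min hz₀pos hxdist), ?_, ?_⟩
        · have h8 := min_le_right (infDist z₀ Γ) (infDist x Γ)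
          linarith
        · intro z hz hzd
          by_contra h
          have hzB : z ∈ B₀ := ⟨hz, h⟩
          have h5 := hz₀min hzB
          have h6 : infDist z₀ Γ ≤ min (infDist z₀ Γ) (infDist x Γ) / 2 := le_trans h5 hzd
          have h7 : min (infDist z₀ Γ) (infDist x Γ) ≤ infDist z₀ Γ := min_le_left _ _
          linarith
    -- the domain U
    obtain ⟨R₀, hR₀⟩ := hSb.closure.subset_closedBall 0
    set R := max R₀ 0 + 1 with hRdef
    have hSR : closure S ⊆ ball 0 R := by
      intro z hz
      rw [mem_ball_zero_iff]
      calc ‖z‖ ≤ R₀ := mem_closedBall_zero_iff.1 (hR₀ hz)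
        _ ≤ max R₀ 0 := le_max_left _ _
        _ < R := lt_add_one _
    set O := {z : CSp n | ε < infDist z Γ} ∩ ball 0 R with hO
    have hOopen : IsOpen O :=
      (isOpen_lt continuous_const (continuous_infDist_pt Γ)).inter isOpen_ball
    set U := Γᶜ ∩ O with hU
    have hUc : U ⊆ {z : CSp n | ε ≤ infDist z Γ} ∩ closedBall 0 R := by
      rintro z ⟨_, hz2, hz3⟩
      refine ⟨?_, ball_subset_closedBall hz3⟩
      show ε ≤ infDist z Γ
      exact le_of_lt hz2
    have hclU : closure U ⊆ {z : CSp n | ε ≤ infDist z Γ} ∩ closedBall 0 R :=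
      closure_minimal hUc
        ((isClosed_le continuous_const (continuous_infDist_pt Γ)).inter isClosed_closedBall)
    have hclUcomp : IsCompact (closure U) :=
      (isCompact_closedBall 0 R).of_isClosed_subset isClosed_closure fun z hz => (hclU hz).2
    have hclUV : closure U ⊆ Γᶜ := by
      intro z hz hzΓ
      have h1 := (hclU hz).1
      rw [mem_setOf_eq, Metric.infDist_zero_of_mem hzΓ] at h1
      linarith
    set W := Γᶜ ∩ {z : CSp n | ε / 2 < infDist z Γ} with hW
    have hclUW : closure U ⊆ W := by
      intro z hz
      refine ⟨hclUV hz, ?_⟩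
      have h1 := (hclU hz).1
      rw [mem_setOf_eq] at h1 ⊢
      linarith
    have happ := hS.2.2 U ⟨O, hOopen, hU⟩ hclUcomp hclUV W
      ⟨{z : CSp n | ε / 2 < infDist z Γ},
        isOpen_lt continuous_const (continuous_infDist_pt Γ), hW⟩
      hclUW f (polyMap_holo P _ _)
    have hxU : x ∈ S ∩ U := ⟨hxS, hxnotΓ, hεx, hSR (subset_closure hxS)⟩
    have hfxnot := happ (mem_image_of_mem f hxU)
    refine hfxnot ?_
    refine mem_unbddCompl.2 ⟨T, ?_, hTconn, hTunb, hfxT⟩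
    intro v hv hvmem
    obtain ⟨z, ⟨hzS, hzcl, hzU⟩, hzv⟩ := hvmem
    have hzcls : z ∈ closure S := subset_closure hzS
    have hzΓc : z ∈ Γᶜ := hclUV hzcl
    have hzO : z ∉ O := fun hO' => hzU ⟨hzΓc, hO'⟩
    have hzball : z ∈ ball 0 R := hSR hzcls
    have hzd : infDist z Γ ≤ ε := by
      by_contra h
      exact hzO ⟨lt_of_not_ge h, hzball⟩
    have hlt := hεkey z hzcls hzd
    have hge := hTsep v hv
    rw [← hzv] at hge
    linarith

/-! ### The separation lemma in `ℂ` (a quantitative Runge-type argument) -/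

open Polynomial in
private lemma exists_sep_poly (K : Set ℂ) (hK : IsCompact K) (C : Set ℂ) (hCK : C ⊆ Kᶜ)
    (hCc : IsConnected C) (hCu : ¬Bornology.IsBounded C) {w : ℂ} (hw : w ∈ C) :
    ∃ r : Polynomial ℂ, (∀ z ∈ K, ‖r.eval z‖ ≤ 1 / 2) ∧ ‖r.eval w‖ = 1 := by
  rcases K.eq_empty_or_nonempty with rfl | hKne
  · exact ⟨1, fun z hz => absurd hz (notMem_empty z), by simp⟩
  haveI : Nonempty K := hKne.to_subtype
  haveI : CompactSpace K := isCompact_iff_compactSpace.1 hK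
  have hKcl : IsClosed K := hK.isClosed
  set A : Subalgebra ℂ C(K, ℂ) := (polynomialFunctions K).topologicalClosure with hA
  have hAclosed : IsClosed (A : Set C(K, ℂ)) := Subalgebra.isClosed_topologicalClosure _
  set G : Set ℂ := {b | ∃ g : C(K, ℂ), g ∈ A ∧ ∀ z : K, g z * ((z : ℂ) - b) = 1} with hG
  have step : ∀ h : C(K, ℂ), h ∈ A → ∀ b : ℂ,
      (∀ z : K, ‖1 - h z * ((z : ℂ) - b)‖ ≤ 1 / 2) → b ∈ G := by
    intro h hhA b hb
    set m : C(K, ℂ) := (X - Polynomial.C b).toContinuousMapOn K with hm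
    have hmA : m ∈ A := (polynomialFunctions K).le_topologicalClosure
      (Subalgebra.mem_map.2 ⟨X - Polynomial.C b, Algebra.mem_top, rfl⟩)
    have hmz : ∀ z : K, m z = (z : ℂ) - b := fun z => by
      simp [hm]
    set t : C(K, ℂ) := 1 - h * m with ht
    have htA : t ∈ A := A.sub_mem A.one_mem (A.mul_mem hhA hmA)
    have htz : ∀ z : K, t z = 1 - h z * ((z : ℂ) - b) := fun z => by
      simp [ht, hmz z]
    have htnorm : ‖t‖ ≤ 1 / 2 := (ContinuousMap.norm_le _ (by norm_num)).2 fun z => by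
      rw [htz z]; exact hb z
    have htlt : ‖t‖ < 1 := lt_of_le_of_lt htnorm (by norm_num)
    have hsum : Summable fun k : ℕ => t ^ k := summable_geometric_of_norm_lt_one htlt
    set Sc : C(K, ℂ) := ∑' k : ℕ, t ^ k with hSc
    have hScA : Sc ∈ A := by
      refine hAclosed.mem_of_tendsto hsum.hasSum.tendsto_sum_nat
        (Filter.Eventually.of_forall fun N => ?_)
      exact Subalgebra.sum_mem A fun k _ => Subalgebra.pow_mem A htA k
    refine ⟨h * Sc, A.mul_mem hhA hScA, fun z => ?_⟩
    have hz : Sc z = ∑' k : ℕ, (t z) ^ k := by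
      have h1 : (ContinuousMap.evalCLM ℂ z) Sc
          = ∑' k : ℕ, (ContinuousMap.evalCLM ℂ z) (t ^ k) :=
        ContinuousLinearMap.map_tsum _ hsum
      simpa using h1
    have hu : ‖t z‖ < 1 := lt_of_le_of_lt (t.norm_coe_le_norm z) htlt
    have hgeo : ∑' k : ℕ, (t z) ^ k = (1 - t z)⁻¹ := tsum_geometric_of_norm_lt_one hu
    have hne : (1 : ℂ) - t z ≠ 0 := by
      intro h0
      rw [sub_eq_zero] at h0
      rw [← h0] at hu
      simp at hu
    calc (h * Sc) z * ((z : ℂ) - b) = h z * Sc z * ((z : ℂ) - b) := by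
          rw [ContinuousMap.mul_apply]
      _ = (1 - t z)⁻¹ * (h z * ((z : ℂ) - b)) := by rw [hz, hgeo]; ring
      _ = (1 - t z)⁻¹ * (1 - t z) := by rw [htz z]; ring_nf
      _ = 1 := inv_mul_cancel₀ hne
  have hGK : G ⊆ Kᶜ := by
    rintro b ⟨g, _, hgb⟩ hbK
    have h1 := hgb ⟨b, hbK⟩
    simp at h1
  obtain ⟨M₀, hM₀⟩ := isBounded_iff_forall_norm_le.1 hK.isBounded
  set M := max M₀ 0 with hMdef
  have hMK : ∀ z ∈ K, ‖z‖ ≤ M := fun z hz => (hM₀ z hz).trans (le_max_left _ _)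
  have hM0 : (0 : ℝ) ≤ M := le_max_right _ _
  have hfar : ∀ a : ℂ, 2 * M + 1 ≤ ‖a‖ → a ∈ G := by
    intro a ha
    have hapos : (0 : ℝ) < ‖a‖ := by linarith
    have ha0 : a ≠ 0 := norm_pos_iff.1 hapos
    refine step ((algebraMap ℂ C(K, ℂ)) (-a⁻¹)) (A.algebraMap_mem _) a fun z => ?_
    have hzv : ((algebraMap ℂ C(K, ℂ)) (-a⁻¹)) z = -a⁻¹ := rfl
    rw [hzv]
    have he : (1 : ℂ) - (-a⁻¹) * ((z : ℂ) - a) = a⁻¹ * (z : ℂ) := by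
      field_simp; ring
    rw [he, norm_mul, norm_inv]
    have hz2 : ‖(z : ℂ)‖ ≤ M := hMK _ z.2
    calc ‖a‖⁻¹ * ‖(z : ℂ)‖ ≤ (2 * M + 1)⁻¹ * M := by
          apply mul_le_mul (inv_anti₀ (by linarith) ha) hz2 (norm_nonneg _)
            (by positivity)
      _ ≤ 1 / 2 := by
          rw [inv_mul_eq_div, div_le_div_iff₀ (by linarith) (by norm_num)]
          linarith
  have hGopen : IsOpen G := by
    refine Metric.isOpen_iff.2 fun a haG => ?_
    obtain ⟨g, hgA, hg⟩ := haG
    have haK : a ∉ K := hGK ⟨g, hgA, hg⟩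
    have hdpos : 0 < infDist a K := (hKcl.notMem_iff_infDist_pos hKne).1 haK
    refine ⟨infDist a K / 2, by linarith, fun b hb => ?_⟩
    rw [mem_ball] at hb
    refine step g hgA b fun z => ?_
    have h1 : g z * ((z : ℂ) - a) = 1 := hg z
    have h2 : (1 : ℂ) - g z * ((z : ℂ) - b) = g z * (b - a) := by
      have h3 : g z * ((z : ℂ) - b) = g z * ((z : ℂ) - a) - g z * (b - a) := by ring
      rw [h3, h1]; ring
    rw [h2, norm_mul]
    have hgz : ‖g z‖ = ‖(z : ℂ) - a‖⁻¹ :=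
      eq_inv_of_mul_eq_one_left (by rw [← norm_mul, h1, norm_one])
    have hd : infDist a K ≤ ‖(z : ℂ) - a‖ :=
      le_trans (infDist_le_dist_of_mem z.2) (by rw [dist_eq_norm, norm_sub_rev])
    rw [hgz]
    calc ‖(z : ℂ) - a‖⁻¹ * ‖b - a‖ ≤ (infDist a K)⁻¹ * (infDist a K / 2) := by
          apply mul_le_mul (inv_anti₀ hdpos hd) ?_ (norm_nonneg _) (by positivity)
          rw [← dist_eq_norm]
          exact le_of_lt hb
      _ = 1 / 2 := by field_simp
  have hGrc : ∀ b : ℂ, b ∈ closure G → b ∉ K → b ∈ G := by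
    intro b hbc hbK
    have hdpos : 0 < infDist b K := (hKcl.notMem_iff_infDist_pos hKne).1 hbK
    obtain ⟨a, haG, hab⟩ := Metric.mem_closure_iff.1 hbc (infDist b K / 3) (by linarith)
    obtain ⟨g, hgA, hg⟩ := haG
    refine step g hgA b fun z => ?_
    have h1 : g z * ((z : ℂ) - a) = 1 := hg z
    have h2 : (1 : ℂ) - g z * ((z : ℂ) - b) = g z * (b - a) := by
      have h3 : g z * ((z : ℂ) - b) = g z * ((z : ℂ) - a) - g z * (b - a) := by ring
      rw [h3, h1]; ring
    rw [h2, norm_mul]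
    have hgz : ‖g z‖ = ‖(z : ℂ) - a‖⁻¹ :=
      eq_inv_of_mul_eq_one_left (by rw [← norm_mul, h1, norm_one])
    have hzb : infDist b K ≤ ‖(z : ℂ) - b‖ :=
      le_trans (infDist_le_dist_of_mem z.2) (by rw [dist_eq_norm, norm_sub_rev])
    have hba : ‖b - a‖ < infDist b K / 3 := by rw [← dist_eq_norm]; exact hab
    have htri : ‖(z : ℂ) - b‖ ≤ ‖(z : ℂ) - a‖ + ‖a - b‖ :=
      norm_sub_le_norm_sub_add_norm_sub _ _ _
    have hrev : ‖a - b‖ = ‖b - a‖ := norm_sub_rev a b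
    have hza : (2 / 3 : ℝ) * infDist b K ≤ ‖(z : ℂ) - a‖ := by linarith
    rw [hgz]
    calc ‖(z : ℂ) - a‖⁻¹ * ‖b - a‖
        ≤ ((2 / 3 : ℝ) * infDist b K)⁻¹ * (infDist b K / 3) := by
          apply mul_le_mul (inv_anti₀ (by linarith) hza) (le_of_lt hba)
            (norm_nonneg _) (by positivity)
      _ = 1 / 2 := by field_simp
  have hCG : C ⊆ G := by
    have hopen2 : IsOpen (Kᶜ \ G) := by
      have heq : Kᶜ \ G = Kᶜ ∩ (closure G)ᶜ := by
        ext b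
        constructor
        · rintro ⟨hb1, hb2⟩; exact ⟨hb1, fun hc => hb2 (hGrc b hc hb1)⟩
        · rintro ⟨hb1, hb2⟩; exact ⟨hb1, fun hb => hb2 (subset_closure hb)⟩
      rw [heq]
      exact (isOpen_compl_iff.2 hKcl).inter isClosed_closure.isOpen_compl
    obtain ⟨c0, hc0C, hc0⟩ : ∃ c0 ∈ C, 2 * M + 1 ≤ ‖c0‖ := by
      by_contra h
      push_neg at h
      exact hCu (isBounded_iff_forall_norm_le.2 ⟨2 * M + 1, fun v hv => le_of_lt (h v hv)⟩)
    by_contra hnot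
    obtain ⟨v0, hv0C, hv0G⟩ : ∃ v ∈ C, v ∉ G := by
      by_contra h2
      push_neg at h2
      exact hnot h2
    obtain ⟨q, hq⟩ := hCc.isPreconnected G (Kᶜ \ G) hGopen hopen2
      (fun v hv => by
        by_cases hvG : v ∈ G
        · exact Or.inl hvG
        · exact Or.inr ⟨hCK hv, hvG⟩)
      ⟨c0, hc0C, hfar c0 hc0⟩ ⟨v0, hv0C, hCK hv0C, hv0G⟩
    exact hq.2.2.2 hq.2.1
  obtain ⟨g, hgA, hg⟩ := hCG hw
  set D := M + ‖w‖ + 1 with hD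
  have hDpos : (0 : ℝ) < D := by positivity
  have hgc : g ∈ closure (polynomialFunctions K : Set C(K, ℂ)) := by
    rw [← Subalgebra.topologicalClosure_coe]
    exact hgA
  obtain ⟨q', hq'mem, hq'dist⟩ := Metric.mem_closure_iff.1 hgc (1 / (2 * D)) (by positivity)
  obtain ⟨q, -, rfl⟩ := Subalgebra.mem_map.1 hq'mem
  refine ⟨1 - (X - Polynomial.C w) * q, fun z hz => ?_, by simp⟩
  set zz : K := ⟨z, hz⟩ with hzz
  have h1 : g zz * (z - w) = 1 := hg zz
  have h2 : Polynomial.eval z (1 - (X - Polynomial.C w) * q)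
      = 1 - (z - w) * Polynomial.eval z q := by simp
  have h3 : (z - w) * (g zz - Polynomial.eval z q) = 1 - (z - w) * Polynomial.eval z q := by
    rw [mul_sub, mul_comm (z - w) (g zz), h1]
  rw [h2, ← h3, norm_mul]
  have h4 : ‖z - w‖ ≤ D := by
    calc ‖z - w‖ ≤ ‖z‖ + ‖w‖ := norm_sub_le _ _
      _ ≤ M + ‖w‖ := by gcongr; exact hMK z hz
      _ ≤ D := by rw [hD]; linarith
  have h5 : ‖g zz - Polynomial.eval z q‖ ≤ 1 / (2 * D) := by
    have he : g zz - Polynomial.eval z q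
        = (g - (Polynomial.toContinuousMapOnAlgHom K) q) zz := by
      simp; rfl
    rw [he]
    refine le_trans ((g - (Polynomial.toContinuousMapOnAlgHom K) q).norm_coe_le_norm zz) ?_
    rw [← dist_eq_norm]
    exact le_of_lt hq'dist
  calc ‖z - w‖ * ‖g zz - Polynomial.eval z q‖ ≤ D * (1 / (2 * D)) :=
        mul_le_mul h4 h5 (norm_nonneg _) hDpos.le
    _ = 1 / 2 := by field_simp

/-! ### Part 2: for `p = 1` the intersection is the polynomial hull -/

private lemma evalCSp_continuous {n : ℕ} (Q : MvPolynomial (Fin n) ℂ) :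
    Continuous (fun z : CSp n => MvPolynomial.eval (fun i => z i) Q) :=
  (eval_differentiable Q).continuous.comp
    (PiLp.continuousLinearEquiv 2 ℂ (fun _ : Fin n => ℂ)).continuous

private lemma part2sub {n : ℕ} (Γ : Set (CSp n)) (hΓ : IsCompact Γ) :
    (⋂ P : Fin 1 → MvPolynomial (Fin n) ℂ, GammaPi Γ P) ⊆ polyHull Γ := by
  intro x hx Q
  set M := sSup ((fun z : CSp n => ‖MvPolynomial.eval (fun i => z i) Q‖) '' Γ) with hM
  by_contra hlt
  push_neg at hlt
  set P : Fin 1 → MvPolynomial (Fin n) ℂ := fun _ => Q with hP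
  have hxG := mem_iInter.1 hx P
  have hbdd : BddAbove ((fun z : CSp n => ‖MvPolynomial.eval (fun i => z i) Q‖) '' Γ) :=
    (hΓ.image (continuous_norm.comp (evalCSp_continuous Q))).bddAbove
  have hM0 : (0 : ℝ) ≤ M := by
    rcases Γ.eq_empty_or_nonempty with h | ⟨z, hz⟩
    · simp [hM, h, Real.sSup_empty]
    · exact le_trans (norm_nonneg _) (le_csSup hbdd ⟨z, hz, rfl⟩)
  have hrank : (1 : Cardinal) < Module.rank ℝ ℂ := by
    rw [Complex.rank_real_complex]; norm_num
  -- the set `{c : ℂ | M < ‖c‖}` is connected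
  have hconnC : IsConnected {c : ℂ | M < ‖c‖} := by
    have himg : (fun q : ℝ × ℂ => q.1 • q.2) '' (Ioi M ×ˢ sphere (0 : ℂ) 1)
        = {c : ℂ | M < ‖c‖} := by
      ext c
      constructor
      · rintro ⟨⟨t, v⟩, ⟨ht, hv⟩, rfl⟩
        have hv1 : ‖v‖ = 1 := by simpa using hv
        have ht0 : 0 < t := lt_of_le_of_lt hM0 ht
        simp only [mem_setOf_eq, norm_smul, Real.norm_eq_abs, abs_of_pos ht0, hv1, mul_one]
        exact ht
      · intro hc
        have hc0 : c ≠ 0 := by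
          intro h
          rw [h] at hc
          simp only [mem_setOf_eq, norm_zero] at hc
          linarith
        have hcn : ‖c‖ ≠ 0 := norm_ne_zero_iff.2 hc0
        refine ⟨(‖c‖, ‖c‖⁻¹ • c), ⟨hc, ?_⟩, ?_⟩
        · rw [mem_sphere_zero_iff_norm, norm_smul, Real.norm_eq_abs, abs_of_nonneg
            (by positivity), inv_mul_cancel₀ hcn]
        · show ‖c‖ • ‖c‖⁻¹ • c = c
          rw [smul_smul, mul_inv_cancel₀ hcn, one_smul]
    rw [← himg]
    exact (isConnected_Ioi.prod (isConnected_sphere hrank 0 zero_le_one)).image _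
      (continuous_fst.smul continuous_snd).continuousOn
  -- transfer to `CSp 1`
  set e0 : CSp 1 := EuclideanSpace.single 0 (1 : ℂ) with he0
  set ψ : ℂ → CSp 1 := fun c => c • e0 with hψ
  have hψcont : Continuous ψ := continuous_id.smul continuous_const
  have he0n : ‖e0‖ = 1 := by rw [he0, EuclideanSpace.norm_single, norm_one]
  have hψnorm : ∀ c : ℂ, ‖ψ c‖ = ‖c‖ := fun c => by
    rw [hψ, norm_smul, he0n, mul_one]
  have hψ0 : ∀ c : ℂ, ψ c 0 = c := fun c => by
    show c • (e0 0) = c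
    rw [he0]
    simp [EuclideanSpace.single_apply]
  set C₀ : Set (CSp 1) := {v : CSp 1 | M < ‖v‖} with hC₀
  have himg2 : ψ '' {c : ℂ | M < ‖c‖} = C₀ := by
    ext v
    constructor
    · rintro ⟨c, hc, rfl⟩
      show M < ‖ψ c‖
      rw [hψnorm]
      exact hc
    · intro hv
      refine ⟨v 0, ?_, ?_⟩
      · show M < ‖v 0‖
        rw [← csp1_norm]
        exact hv
      · ext j
        have hj : j = 0 := Subsingleton.elim j 0
        rw [hj, hψ0]
  have hC₀conn : IsConnected C₀ := by
    rw [← himg2]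
    exact hconnC.image ψ hψcont.continuousOn
  have hC₀unb : ¬Bornology.IsBounded C₀ := by
    refine unbounded_of_norm fun c => ?_
    refine ⟨ψ ((max (M + 1) (c + 1) : ℝ) : ℂ), ?_, ?_⟩
    · show M < ‖ψ _‖
      rw [hψnorm, Complex.norm_real, Real.norm_eq_abs,
        abs_of_pos (lt_of_lt_of_le (by linarith) (le_max_left (M + 1) (c + 1)))]
      exact lt_of_lt_of_le (by linarith) (le_max_left _ _)
    · rw [hψnorm, Complex.norm_real, Real.norm_eq_abs,
        abs_of_pos (lt_of_lt_of_le (by linarith) (le_max_left (M + 1) (c + 1)))]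
      exact lt_of_lt_of_le (by linarith) (le_max_right _ _)
  have hC₀sub : C₀ ⊆ (polyMap P '' Γ)ᶜ := by
    rintro v hv ⟨z, hz, rfl⟩
    have h1 : ‖polyMap P z‖ ≤ M := by
      rw [csp1_norm]
      exact le_csSup hbdd ⟨z, hz, rfl⟩
    exact absurd hv (not_lt.2 h1)
  have hmem : polyMap P x ∈ C₀ := by
    show M < ‖polyMap P x‖
    rw [csp1_norm]
    exact hlt
  exact hxG (mem_unbddCompl.2 ⟨C₀, hC₀sub, hC₀conn, hC₀unb, hmem⟩)

private lemma part2sup {n : ℕ} (Γ : Set (CSp n)) (hΓ : IsCompact Γ) :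
    polyHull Γ ⊆ ⋂ P : Fin 1 → MvPolynomial (Fin n) ℂ, GammaPi Γ P := by
  intro x hx
  refine mem_iInter.2 fun P => ?_
  simp only [GammaPi, mem_preimage, mem_compl_iff]
  intro hcon
  obtain ⟨C, hCsub, hCconn, hCunb, hxC⟩ := mem_unbddCompl.1 hcon
  set φ : CSp 1 → ℂ := fun v => v 0 with hφ
  have hφiso : Isometry φ := Isometry.of_dist_eq fun a b => by
    rw [dist_eq_norm, dist_eq_norm, csp1_norm (a - b)]
    rfl
  set K : Set ℂ := φ '' (polyMap P '' Γ) with hK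
  have hKcomp : IsCompact K :=
    (hΓ.image (polyMap_differentiable P).continuous).image hφiso.continuous
  set C' : Set ℂ := φ '' C with hC'
  have hC'conn : IsConnected C' := hCconn.image φ hφiso.continuous.continuousOn
  have hC'unb : ¬Bornology.IsBounded C' := by
    refine unbounded_of_norm fun c => ?_
    have hCn : ∃ v ∈ C, c < ‖v‖ := by
      by_contra h
      push_neg at h
      exact hCunb (isBounded_iff_forall_norm_le.2 ⟨c, h⟩)
    obtain ⟨v, hv, hcv⟩ := hCn
    refine ⟨φ v, mem_image_of_mem φ hv, ?_⟩
    rw [hφ]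
    rw [← csp1_norm]
    exact hcv
  have hC'sub : C' ⊆ Kᶜ := by
    rintro _ ⟨v, hvC, rfl⟩ ⟨u, hu, huv⟩
    have h6 : u = v := hφiso.injective huv
    rw [h6] at hu
    exact hCsub hvC hu
  have hwC' : φ (polyMap P x) ∈ C' := mem_image_of_mem φ hxC
  obtain ⟨r, hrK, hrw⟩ := exists_sep_poly K hKcomp C' hC'sub hC'conn hC'unb hwC'
  set Q' : MvPolynomial (Fin n) ℂ :=
    Polynomial.eval₂ (MvPolynomial.C : ℂ →+* MvPolynomial (Fin n) ℂ) (P 0) r with hQ'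
  have hev : ∀ y : Fin n → ℂ,
      MvPolynomial.eval y Q' = Polynomial.eval (MvPolynomial.eval y (P 0)) r := by
    intro y
    rw [hQ', Polynomial.hom_eval₂]
    have h1 : (MvPolynomial.eval y).comp (MvPolynomial.C : ℂ →+* MvPolynomial (Fin n) ℂ)
        = RingHom.id ℂ := RingHom.ext fun c => by simp
    rw [h1]
    rfl
  have h1 := hx Q'
  rw [hev (fun i => x i)] at h1
  have h2 : sSup ((fun z : CSp n => ‖MvPolynomial.eval (fun i => z i) Q'‖) '' Γ) ≤ 1 / 2 := by
    refine Real.sSup_le ?_ (by norm_num)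
    rintro m ⟨z, hz, rfl⟩
    show ‖MvPolynomial.eval (fun i => z i) Q'‖ ≤ 1 / 2
    rw [hev (fun i => z i)]
    refine hrK _ ⟨polyMap P z, mem_image_of_mem _ hz, rfl⟩
  have h3 : MvPolynomial.eval (fun i => x i) (P 0) = φ (polyMap P x) := rfl
  rw [h3, hrw] at h1
  linarith

/-- For `Γ ⊆ ℂⁿ` compact, the polynomial `p`-hull `hull(Γ,p)` is contained in
`⋂_Π Γ_Π`, the intersection over all polynomial maps `Π : ℂⁿ → ℂᵖ`; moreover for `p = 1`
the latter intersection equals the classical polynomial hull `Γ̂`. -/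
theorem pHull_subset_polyMapHull {n : ℕ} (p : ℕ) (hp : 1 ≤ p)
    (Γ : Set (CSp n)) (hΓ : IsCompact Γ) :
    (pHull p Γ ⊆ ⋂ P : Fin p → MvPolynomial (Fin n) ℂ, GammaPi Γ P) ∧
      (p = 1 → (⋂ P : Fin p → MvPolynomial (Fin n) ℂ, GammaPi Γ P) = polyHull Γ) := by
  constructor
  · exact part1 p hp Γ hΓ
  · intro hp1
    subst hp1
    exact Subset.antisymm (part2sub Γ hΓ) (part2sup Γ hΓ)
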